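/- Let (E_n)_{n∈ℕ₀} be independent events, O_N := ∑_{n=N+1}^∞ 1(E_n), and C_N := ∑_{n=N}^∞ P(E_n). Suppose C_{N+1} < 1. Then for any r < -ln(C_{N+1}), E[e^{r·O_N}] ≤ 1 + C_{N+1}·e^r/(1 - C_{N+1}·e^r). -/

import Mathlib

open MeasureTheory ProbabilityTheory Set
open scoped ENNReal

/-- `e^{r·x}` for an extended-nonnegative count `x`, with value `⊤` at `x = ⊤`. -/
noncomputable def eexp (r : ℝ) (x : ℝ≥0∞) : ℝ≥0∞ :=
  if x = ⊤ then ⊤ else ENNReal.ofReal (Real.exp (r * x.toReal))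

/-- For independent events `(Eₙ)` with tail count `O_N = ∑_{n>N} 1(Eₙ)` and tail sum
`C_{N+1} = ∑_{n≥N+1} P(Eₙ) < 1`, for any `r < -ln C_{N+1}`:
`E[e^{r·O_N}] ≤ 1 + C_{N+1}·eʳ/(1 - C_{N+1}·eʳ)`. -/

lemma tsum_ind_count {Ω : Type*} (A : ℕ → Set Ω) (ω : Ω) (h : {n | ω ∈ A n}.Finite) :
    ∑' n, (A n).indicator (fun _ => (1:ℝ≥0∞)) ω = h.toFinset.card := by
  rw [tsum_eq_sum (s := h.toFinset) (fun n hn => ?_)]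
  · rw [Finset.sum_congr rfl (fun n hn => ?_), Finset.sum_const, nsmul_eq_mul, mul_one]
    have : ω ∈ A n := by simpa using hn
    simp [Set.indicator_of_mem this]
  · have : ω ∉ A n := by simpa using hn
    simp [Set.indicator_of_notMem this]

lemma tsum_pi_fin_prod (p : ℕ → ℝ≥0∞) (k : ℕ) :
    ∑' v : Fin k → ℕ, ∏ i, p (v i) = (∑' n, p n) ^ k := by
  induction k with
  | zero =>
      have : ∑' v : Fin 0 → ℕ, ∏ i, p (v i) = ∏ i : Fin 0, p ((fun _ => 0) i) :=
        tsum_eq_single _ (fun b hb => absurd (funext fun i => i.elim0) hb)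
      rw [this]; simp
  | succ k ih =>
      rw [← Equiv.tsum_eq (Fin.consEquiv (fun _ => ℕ))]
      have : ∀ z : ℕ × (Fin k → ℕ),
          (∏ i, p ((Fin.consEquiv (fun _ => ℕ)) z i)) = p z.1 * ∏ i, p (z.2 i) := by
        intro z
        have h1 : (fun i => p ((Fin.consEquiv fun _ => ℕ) z i))
            = Fin.cons (p z.1) (fun i => p (z.2 i)) := by
          funext i
          refine Fin.cases ?_ (fun j => ?_) i <;> simp [Fin.consEquiv]
        calc ∏ i, p ((Fin.consEquiv fun _ => ℕ) z i)
            = ∏ i, Fin.cons (p z.1) (fun i => p (z.2 i)) i := by rw [h1]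
          _ = p z.1 * ∏ i, p (z.2 i) := Fin.prod_cons _ _
      rw [tsum_congr this, ENNReal.tsum_prod']
      simp_rw [ENNReal.tsum_mul_left]
      rw [ENNReal.tsum_mul_right, ih, pow_succ]
      ring

lemma iInter_bound {Ω : Type*} [MeasurableSpace Ω] {P : Measure Ω} {E : ℕ → Set Ω}
    (hind : iIndepSet E P) {k : ℕ} (w : Fin k → ℕ) (hw : Function.Injective w) :
    P (⋂ i, E (w i)) = ∏ i, P (E (w i)) := by
  have h := hind.meas_biInter (Finset.image w Finset.univ)
  have hset : (⋂ i ∈ Finset.image w Finset.univ, E i) = ⋂ i, E (w i) := by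
    ext ω
    simp only [Set.mem_iInter, Finset.mem_image, Finset.mem_univ, true_and]
    constructor
    · intro h i; exact h (w i) ⟨i, rfl⟩
    · rintro h i ⟨j, rfl⟩; exact h j
  rw [hset] at h
  rw [h, Finset.prod_image (fun i _ j _ hij => hw hij)]

lemma tail_bound {Ω : Type*} [MeasurableSpace Ω] (P : Measure Ω) (E : ℕ → Set Ω)
    (hind : iIndepSet E P) (g : ℕ → ℕ) (hg : Function.Injective g) (k : ℕ) :
    P {ω | (k : ℝ≥0∞) ≤ ∑' n, (E (g n)).indicator (fun _ => (1:ℝ≥0∞)) ω}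
      ≤ (∑' n, P (E (g n))) ^ k := by
  set A := fun n => E (g n) with hA
  have hsub : {ω | (k : ℝ≥0∞) ≤ ∑' n, (A n).indicator (fun _ => (1:ℝ≥0∞)) ω}
      ⊆ ⋃ v : {v : Fin k → ℕ // Function.Injective v}, ⋂ i, A (v.1 i) := by
    intro ω hω
    have hex : ∃ v : Fin k → ℕ, Function.Injective v ∧ ∀ i, ω ∈ A (v i) := by
      by_cases hS : {n | ω ∈ A n}.Finite
      · have hcard : k ≤ hS.toFinset.card := by
          have hc := tsum_ind_count A ω hS
          rw [Set.mem_setOf_eq, hc] at hω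
          exact_mod_cast hω
        obtain ⟨t, hts, htc⟩ := Finset.exists_subset_card_eq hcard
        refine ⟨fun i => (t.orderIsoOfFin htc i : ℕ), ?_, fun i => ?_⟩
        · intro i j hij
          exact (t.orderIsoOfFin htc).injective (Subtype.ext hij)
        · have hmem : ((t.orderIsoOfFin htc i : ℕ)) ∈ t := (t.orderIsoOfFin htc i).2
          have := hts hmem
          simpa using hS.mem_toFinset.mp (by simpa using this)
      · set e := Set.Infinite.natEmbedding _ hS with he
        refine ⟨fun i => (e i.val : ℕ), ?_, fun i => ?_⟩
        · intro i j hij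
          exact Fin.val_injective (e.injective (Subtype.ext hij))
        · exact (e i.val).2
    obtain ⟨v, hvi, hvm⟩ := hex
    exact Set.mem_iUnion.2 ⟨⟨v, hvi⟩, Set.mem_iInter.2 hvm⟩
  calc P {ω | (k : ℝ≥0∞) ≤ ∑' n, (A n).indicator (fun _ => (1:ℝ≥0∞)) ω}
      ≤ P (⋃ v : {v : Fin k → ℕ // Function.Injective v}, ⋂ i, A (v.1 i)) :=
        measure_mono hsub
    _ ≤ ∑' v : {v : Fin k → ℕ // Function.Injective v}, P (⋂ i, A (v.1 i)) :=
        measure_iUnion_le _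
    _ = ∑' v : {v : Fin k → ℕ // Function.Injective v}, ∏ i, P (A (v.1 i)) :=
        tsum_congr fun v => iInter_bound hind (g ∘ v.1) (hg.comp v.2)
    _ ≤ ∑' v : Fin k → ℕ, ∏ i, P (A (v i)) :=
        ENNReal.tsum_comp_le_tsum_of_injective Subtype.val_injective _
    _ = (∑' n, P (A n)) ^ k := tsum_pi_fin_prod (fun n => P (A n)) k

theorem stmt7 {Ω : Type*} [MeasurableSpace Ω] (P : Measure Ω) [IsProbabilityMeasure P]
    (E : ℕ → Set Ω) (hE : ∀ n, MeasurableSet (E n))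
    (hind : iIndepSet E P) (N : ℕ)
    (hC1 : (∑' n : ℕ, P (E (N + 1 + n))) < 1)
    (C : ℝ) (hCdef : C = (∑' n : ℕ, P (E (N + 1 + n))).toReal)
    (r : ℝ) (hr : r < -Real.log C) :
    (∫⁻ ω, eexp r (∑' n : ℕ, Set.indicator (E (N + 1 + n)) (fun _ => (1 : ℝ≥0∞)) ω) ∂P)
      ≤ ENNReal.ofReal (1 + C * Real.exp r / (1 - C * Real.exp r)) := by
  set g : ℕ → ℕ := fun n => N + 1 + n with hg
  have hginj : Function.Injective g := fun a b h => by simpa [hg] using h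
  set f : Ω → ℝ≥0∞ := fun ω => ∑' n : ℕ, (E (g n)).indicator (fun _ => (1 : ℝ≥0∞)) ω with hf
  have hfm : Measurable f :=
    Measurable.ennreal_tsum fun n => measurable_const.indicator (hE (g n))
  set Cb : ℝ≥0∞ := ∑' n : ℕ, P (E (g n)) with hCb
  have hCbne : Cb ≠ ⊤ := hC1.ne_top
  have hCbC : ENNReal.ofReal C = Cb := by rw [hCdef]; exact ENNReal.ofReal_toReal hCbne
  have hC0 : 0 ≤ C := hCdef ▸ ENNReal.toReal_nonneg
  set x : ℝ := C * Real.exp r with hx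
  have hx0 : 0 ≤ x := mul_nonneg hC0 (Real.exp_pos r).le
  have hx1 : x < 1 := by
    rcases eq_or_lt_of_le hC0 with h0 | h0
    · simp [hx, ← h0]
    · have hlog : r < Real.log C⁻¹ := by rwa [Real.log_inv]
      have := Real.exp_lt_exp.2 hlog
      rw [Real.exp_log (by positivity)] at this
      calc x = C * Real.exp r := rfl
        _ < C * C⁻¹ := by exact mul_lt_mul_of_pos_left this h0
        _ = 1 := mul_inv_cancel₀ h0.ne'
  have h1x : 0 < 1 - x := by linarith
  set q : ℝ≥0∞ := ENNReal.ofReal x with hq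
  have hq1 : q < 1 := ENNReal.ofReal_lt_one.2 hx1
  set c : ℕ → ℝ≥0∞ := fun k => ENNReal.ofReal (Real.exp (r * ((k : ℝ) + 1))) with hc
  set S : ℕ → Set Ω := fun k => {ω | ((k + 1 : ℕ) : ℝ≥0∞) ≤ f ω} with hS
  have hSm : ∀ k, MeasurableSet (S k) := fun k => hfm measurableSet_Ici
  -- a.e. pointwise bound
  have hae : ∀ᵐ ω ∂P, {n | ω ∈ E (g n)}.Finite :=
    ae_finite_setOf_mem (by rw [← hCb]; exact hCbne)
  have hpt : ∀ᵐ ω ∂P, eexp r (f ω)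
      ≤ 1 + ∑' k : ℕ, c k * (S k).indicator (fun _ => (1 : ℝ≥0∞)) ω := by
    filter_upwards [hae] with ω hfin
    have hfω : f ω = (hfin.toFinset.card : ℝ≥0∞) := tsum_ind_count _ ω hfin
    rcases Nat.eq_zero_or_eq_succ_pred hfin.toFinset.card with h0 | hsucc
    · rw [hfω, h0]
      norm_num [eexp]
    · set j := hfin.toFinset.card - 1 with hj
      have hcard : hfin.toFinset.card = j + 1 := hsucc
      rw [hfω, hcard]
      have hne : ((j + 1 : ℕ) : ℝ≥0∞) ≠ ⊤ := ENNReal.natCast_ne_top _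
      have h1 : eexp r ((j + 1 : ℕ) : ℝ≥0∞) = c j := by
        rw [eexp, if_neg hne, ENNReal.toReal_natCast]
        show _ = ENNReal.ofReal (Real.exp (r * ((j : ℝ) + 1)))
        norm_num
      have hmem : ω ∈ S j := by
        rw [hS, Set.mem_setOf_eq, hfω, hcard]
      calc eexp r ((j + 1 : ℕ) : ℝ≥0∞) = c j * (S j).indicator (fun _ => (1:ℝ≥0∞)) ω := by
            rw [h1, Set.indicator_of_mem hmem, mul_one]
        _ ≤ ∑' k : ℕ, c k * (S k).indicator (fun _ => (1:ℝ≥0∞)) ω := ENNReal.le_tsum j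
        _ ≤ 1 + _ := le_add_self
  calc (∫⁻ ω, eexp r (f ω) ∂P)
      ≤ ∫⁻ ω, (1 + ∑' k : ℕ, c k * (S k).indicator (fun _ => (1:ℝ≥0∞)) ω) ∂P :=
        lintegral_mono_ae hpt
    _ = 1 + ∑' k : ℕ, c k * P (S k) := by
        rw [lintegral_add_left measurable_const, lintegral_one, measure_univ]
        congr 1
        rw [lintegral_tsum fun k =>
          ((measurable_const.indicator (hSm k)).const_mul (c k)).aemeasurable]
        refine tsum_congr fun k => ?_
        rw [lintegral_const_mul (c k) (measurable_const.indicator (hSm k)),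
          lintegral_indicator_const (hSm k), one_mul]
    _ ≤ 1 + ∑' k : ℕ, c k * Cb ^ (k + 1) := by
        refine add_le_add_right (ENNReal.tsum_le_tsum fun k => mul_le_mul_right ?_ _) 1
        have := tail_bound P E hind g hginj (k + 1)
        simpa [← hCb, hS] using this
    _ = 1 + ∑' k : ℕ, q ^ (k + 1) := by
        congr 1
        refine tsum_congr fun k => ?_
        have hck : c k = ENNReal.ofReal (Real.exp r) ^ (k + 1) := by
          show ENNReal.ofReal (Real.exp (r * ((k : ℝ) + 1))) = _
          rw [show r * ((k : ℝ) + 1) = ((k + 1 : ℕ) : ℝ) * r by push_cast; ring,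
            Real.exp_nat_mul, ENNReal.ofReal_pow (Real.exp_pos r).le]
        rw [hck, ← hCbC, hq, hx, ENNReal.ofReal_mul hC0, ← mul_pow, mul_comm]
    _ = 1 + q * (1 - q)⁻¹ := by
        congr 1
        simp_rw [pow_succ', ENNReal.tsum_mul_left, ENNReal.tsum_geometric]
    _ = ENNReal.ofReal (1 + x / (1 - x)) := by
        rw [ENNReal.ofReal_add zero_le_one (div_nonneg hx0 h1x.le), ENNReal.ofReal_one,
          ENNReal.ofReal_div_of_pos h1x, ENNReal.ofReal_sub _ hx0, ENNReal.ofReal_one,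
          div_eq_mul_inv]
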